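/- Let a reaction network be given by α, β ∈ ℕ^{n×ν} with Γ = β − α and r = rank Γ, and let 𝒦 be its admissible Jacobian set. Assume the network is robustly P0 and robustly non-degenerate. Then for every I ⊆ {1,…,n} and J ⊆ {1,…,ν} with |I| = |J| = r, and for every V ∈ 𝒦, det(−Γ_{IJ})·det(V_{JI}) ≥ 0. -/

import Mathlib

open Matrix Finset

/-- The principal minor of a square matrix `M` indexed by the set `I`. -/
noncomputable def principalMinor {n : ℕ} (M : Matrix (Fin n) (Fin n) ℝ) (I : Finset (Fin n)) : ℝ :=
  (M.submatrix (fun i : {x // x ∈ I} => (i : Fin n)) (fun i : {x // x ∈ I} => (i : Fin n))).det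

/-- The sum of all `r × r` principal minors of the square matrix `M`. -/
noncomputable def sumMinors {n : ℕ} (r : ℕ) (M : Matrix (Fin n) (Fin n) ℝ) : ℝ :=
  ∑ I ∈ Finset.univ.powersetCard r, principalMinor M I

/-- The determinant of the `r × r` submatrix of `M` with rows indexed by `I`
    and columns indexed by `J` (defined when `|I| = |J| = r`, else `0`). -/
noncomputable def subdet {n ν : ℕ} (r : ℕ) (M : Matrix (Fin n) (Fin ν) ℝ)
    (I : Finset (Fin n)) (J : Finset (Fin ν)) : ℝ :=
  if h : I.card = r ∧ J.card = r then
    (Matrix.of fun a b : Fin r => M (I.orderIsoOfFin h.1 a).1 (J.orderIsoOfFin h.2 b).1).det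
  else 0

/-- The admissible Jacobian set: `V j i > 0` whenever `X i` is a reactant of reaction `j`
    (i.e. `α i j > 0`) and `V j i = 0` otherwise. -/
def admissible {n ν : ℕ} (α : Matrix (Fin n) (Fin ν) ℕ) (V : Matrix (Fin ν) (Fin n) ℝ) : Prop :=
  ∀ i j, (0 < α i j → 0 < V j i) ∧ (α i j = 0 → V j i = 0)

/-- The stoichiometry matrix `Γ = β - α` (entries cast to `ℝ`). -/
def gam {n ν : ℕ} (α β : Matrix (Fin n) (Fin ν) ℕ) : Matrix (Fin n) (Fin ν) ℝ :=
  fun i j => (β i j : ℝ) - (α i j : ℝ)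

open Equiv Equiv.Perm

/-- The increasing enumeration of a finset of size `r`, as a map `Fin r → Fin ν`. -/
noncomputable def embOf {ν r : ℕ} (J : Finset (Fin ν)) (h : J.card = r) : Fin r → Fin ν :=
  fun a => (J.orderIsoOfFin h a : Fin ν)

lemma embOf_injective {ν r : ℕ} (J : Finset (Fin ν)) (h : J.card = r) :
    Function.Injective (embOf J h) := fun a b hab => by
  have := Subtype.ext hab
  exact (J.orderIsoOfFin h).injective this

lemma embOf_mem {ν r : ℕ} (J : Finset (Fin ν)) (h : J.card = r) (a : Fin r) :
    embOf J h a ∈ J := (J.orderIsoOfFin h a).2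

lemma embOf_image {ν r : ℕ} (J : Finset (Fin ν)) (h : J.card = r) :
    Finset.image (embOf J h) Finset.univ = J := by
  apply Finset.eq_of_subset_of_card_le
  · intro x hx
    simp only [Finset.mem_image] at hx
    obtain ⟨a, _, rfl⟩ := hx
    exact embOf_mem J h a
  · rw [Finset.card_image_of_injective _ (embOf_injective J h)]
    simp [h]

lemma cb_aux {r ν : ℕ} {M : Matrix (Fin r) (Fin ν) ℝ} {N : Matrix (Fin ν) (Fin r) ℝ}
    {p : Fin r → Fin ν} (H : ¬Function.Injective p) :
    (∑ σ : Perm (Fin r), ((Perm.sign σ : ℤ) : ℝ) * ∏ x, M (σ x) (p x) * N (p x) x) = 0 := by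
  obtain ⟨i, j, hpij, hij⟩ : ∃ i j, p i = p j ∧ i ≠ j := by
    rw [Function.Injective] at H
    push_neg at H
    obtain ⟨i, j, h1, h2⟩ := H
    exact ⟨i, j, h1, h2⟩
  exact
    Finset.sum_involution (fun σ _ => σ * Equiv.swap i j)
      (fun σ _ => by
        have : (∏ x, M (σ x) (p x)) = ∏ x, M ((σ * Equiv.swap i j) x) (p x) :=
          Fintype.prod_equiv (Equiv.swap i j) _ _ (by simp [Equiv.apply_swap_eq_self hpij])
        simp [this, sign_swap hij, -sign_swap', Finset.prod_mul_distrib])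
      (fun σ _ _ => (not_congr mul_swap_eq_iff).mpr hij) (fun _ _ => Finset.mem_univ _)
      fun σ _ => mul_swap_involutive i j σ

lemma cb_step12 {r ν : ℕ} (M : Matrix (Fin r) (Fin ν) ℝ) (N : Matrix (Fin ν) (Fin r) ℝ) :
    (M * N).det = ∑ p ∈ (Finset.univ : Finset (Fin r → Fin ν)).filter Function.Injective,
      ∑ σ : Perm (Fin r), ((Perm.sign σ : ℤ) : ℝ) * ∏ i, M (σ i) (p i) * N (p i) i := by
  have h1 : (M * N).det
      = ∑ p : Fin r → Fin ν, ∑ σ : Perm (Fin r),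
          ((Perm.sign σ : ℤ) : ℝ) * ∏ i, M (σ i) (p i) * N (p i) i := by
    simp only [det_apply', Matrix.mul_apply, Finset.prod_univ_sum, Finset.mul_sum,
      Fintype.piFinset_univ]
    rw [Finset.sum_comm]
  rw [h1]
  refine (Finset.sum_subset (Finset.filter_subset _ _) fun p _ hp => cb_aux ?_).symm
  simpa using hp

lemma cb_square {r : ℕ} (M N : Matrix (Fin r) (Fin r) ℝ) :
    ∑ τ : Perm (Fin r), ∑ σ : Perm (Fin r),
        ((Perm.sign σ : ℤ) : ℝ) * ∏ i, M (σ i) (τ i) * N (τ i) i = M.det * N.det := by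
  rw [← det_mul, cb_step12]
  refine Finset.sum_bij (fun (τ : Perm (Fin r)) _ => (τ : Fin r → Fin r)) ?_ ?_ ?_ ?_
  · intro τ _
    simp [τ.injective]
  · intro τ₁ _ τ₂ _ h
    exact Equiv.coe_fn_injective h
  · intro p hp
    have hpinj : Function.Injective p := by simpa using hp
    exact ⟨Equiv.ofBijective p ((Finite.injective_iff_bijective).mp hpinj),
      Finset.mem_univ _, rfl⟩
  · intro τ _
    rfl

lemma cauchy_binet {r ν : ℕ} (M : Matrix (Fin r) (Fin ν) ℝ) (N : Matrix (Fin ν) (Fin r) ℝ) :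
    (M * N).det = ∑ J ∈ (Finset.univ : Finset (Fin ν)).powersetCard r,
      if h : J.card = r then
        (M.submatrix id (embOf J h)).det * (N.submatrix (embOf J h) id).det
      else 0 := by
  rw [cb_step12]
  rw [show (∑ J ∈ (Finset.univ : Finset (Fin ν)).powersetCard r,
      if h : J.card = r then
        (M.submatrix id (embOf J h)).det * (N.submatrix (embOf J h) id).det
      else 0)
    = ∑ J ∈ (Finset.univ : Finset (Fin ν)).powersetCard r,
      ∑ τ : Perm (Fin r), ∑ σ : Perm (Fin r),
        ((Perm.sign σ : ℤ) : ℝ) *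
          ∏ i, (if h : J.card = r then M (σ i) (embOf J h (τ i)) * N (embOf J h (τ i)) i else 0)
    from ?_]
  · -- main bijection between injective maps and pairs (J, τ)
    conv_rhs => rw [Finset.sum_sigma']
    refine (Finset.sum_bij
      (fun (x : Σ _ : Finset (Fin ν), Perm (Fin r)) hx =>
        (fun i => embOf x.1 (by
          have := (Finset.mem_sigma.mp hx).1
          exact (Finset.mem_powersetCard.mp this).2) (x.2 i) : Fin r → Fin ν))
      ?_ ?_ ?_ ?_).symm
    · intro x hx
      have hc : x.1.card = r := (Finset.mem_powersetCard.mp (Finset.mem_sigma.mp hx).1).2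
      simp only [Finset.mem_filter, Finset.mem_univ, true_and]
      exact (embOf_injective x.1 hc).comp x.2.injective
    · intro x hx y hy h
      have hcx : x.1.card = r := (Finset.mem_powersetCard.mp (Finset.mem_sigma.mp hx).1).2
      have hcy : y.1.card = r := (Finset.mem_powersetCard.mp (Finset.mem_sigma.mp hy).1).2
      have him : x.1 = y.1 := by
        have e1 : Finset.image (fun i => embOf x.1 hcx (x.2 i)) Finset.univ = x.1 := by
          rw [show (fun i => embOf x.1 hcx (x.2 i)) = embOf x.1 hcx ∘ x.2 from rfl,
            ← Finset.image_image, Finset.image_univ_equiv, embOf_image]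
        have e2 : Finset.image (fun i => embOf y.1 hcy (y.2 i)) Finset.univ = y.1 := by
          rw [show (fun i => embOf y.1 hcy (y.2 i)) = embOf y.1 hcy ∘ y.2 from rfl,
            ← Finset.image_image, Finset.image_univ_equiv, embOf_image]
        rw [← e1, ← e2, h]
      obtain ⟨J, τx⟩ := x
      obtain ⟨J', τy⟩ := y
      cases him
      simp only [Sigma.mk.inj_iff, heq_eq_eq, true_and]
      ext i
      have := congrFun h i
      dsimp only at this
      rw [embOf_injective J hcx this]
    · intro p hp
      have hpinj : Function.Injective p := by simpa using hp
      set J : Finset (Fin ν) := Finset.image p Finset.univ with hJ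
      have hc : J.card = r := by
        rw [hJ, Finset.card_image_of_injective _ hpinj]
        simp
      have hmemJ : ∀ i, p i ∈ J := fun i => Finset.mem_image_of_mem p (Finset.mem_univ i)
      set g : Fin r → Fin r := fun i => (J.orderIsoOfFin hc).symm ⟨p i, hmemJ i⟩ with hg
      have hginj : Function.Injective g := by
        intro a b hab
        apply hpinj
        have := (J.orderIsoOfFin hc).symm.injective.eq_iff.mp hab
        exact congrArg Subtype.val this
      refine ⟨⟨J, Equiv.ofBijective g (Finite.injective_iff_bijective.mp hginj)⟩,
        Finset.mem_sigma.mpr ⟨Finset.mem_powersetCard.mpr ⟨Finset.subset_univ _, hc⟩,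
          Finset.mem_univ _⟩, ?_⟩
      funext i
      show embOf J hc (g i) = p i
      simp only [embOf, hg, OrderIso.apply_symm_apply]
    · intro x hx
      have hc : x.1.card = r := (Finset.mem_powersetCard.mp (Finset.mem_sigma.mp hx).1).2
      dsimp only
      simp only [dif_pos hc]
  · refine Finset.sum_congr rfl fun J hJ => ?_
    have hc : J.card = r := (Finset.mem_powersetCard.mp hJ).2
    rw [dif_pos hc]
    rw [← cb_square (M.submatrix id (embOf J hc)) (N.submatrix (embOf J hc) id)]
    refine Finset.sum_congr rfl fun τ _ => Finset.sum_congr rfl fun σ _ => ?_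
    congr 1
    refine Finset.prod_congr rfl fun i _ => ?_
    rw [dif_pos hc]
    rfl

lemma subdet_eq {n ν r : ℕ} (M : Matrix (Fin n) (Fin ν) ℝ) {I : Finset (Fin n)}
    {J : Finset (Fin ν)} (hI : I.card = r) (hJ : J.card = r) :
    subdet r M I J = (M.submatrix (embOf I hI) (embOf J hJ)).det := by
  rw [subdet, dif_pos ⟨hI, hJ⟩]
  rfl

lemma principalMinor_eq {n r : ℕ} (M : Matrix (Fin n) (Fin n) ℝ) {I : Finset (Fin n)}
    (hI : I.card = r) :
    principalMinor M I = (M.submatrix (embOf I hI) (embOf I hI)).det := by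
  rw [principalMinor]
  rw [show M.submatrix (embOf I hI) (embOf I hI)
      = (M.submatrix (fun i : {x // x ∈ I} => (i : Fin n)) (fun i : {x // x ∈ I} => (i : Fin n))).submatrix
        (I.orderIsoOfFin hI).toEquiv (I.orderIsoOfFin hI).toEquiv from rfl]
  rw [Matrix.det_submatrix_equiv_self]

lemma pm_expand {n ν r : ℕ} (G : Matrix (Fin n) (Fin ν) ℝ) (V : Matrix (Fin ν) (Fin n) ℝ)
    {I : Finset (Fin n)} (hI : I.card = r) :
    principalMinor (G * V) I
      = ∑ J ∈ (Finset.univ : Finset (Fin ν)).powersetCard r, subdet r G I J * subdet r V J I := by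
  rw [principalMinor_eq (G * V) hI]
  rw [Matrix.submatrix_mul G V (embOf I hI) id (embOf I hI) Function.bijective_id]
  rw [cauchy_binet]
  refine Finset.sum_congr rfl fun J hJ => ?_
  have hc : J.card = r := (Finset.mem_powersetCard.mp hJ).2
  rw [dif_pos hc, subdet_eq G hI hc, subdet_eq V hc hI]
  rw [Matrix.submatrix_submatrix, Matrix.submatrix_submatrix]
  simp

lemma subdet_scale {n ν r : ℕ} (V : Matrix (Fin ν) (Fin n) ℝ) (J : Finset (Fin ν)) (t : ℝ)
    {J' : Finset (Fin ν)} {I : Finset (Fin n)} (hJ' : J'.card = r) (hI : I.card = r) :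
    subdet r (Matrix.of fun j i => (if j ∈ J then t else 1) * V j i) J' I
      = t ^ (J' ∩ J).card * subdet r V J' I := by
  rw [subdet_eq _ hJ' hI, subdet_eq V hJ' hI]
  rw [show ((Matrix.of fun j i => (if j ∈ J then t else 1) * V j i : Matrix (Fin ν) (Fin n) ℝ)).submatrix
        (embOf J' hJ') (embOf I hI)
      = Matrix.of (fun a b => (if embOf J' hJ' a ∈ J then t else 1)
          * (V.submatrix (embOf J' hJ') (embOf I hI)) a b) from rfl]
  rw [Matrix.det_mul_column]
  congr 2
  · rw [Finset.prod_ite, Finset.prod_const, Finset.prod_const_one, mul_one]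
    congr 1
    refine Finset.card_bij (fun a _ => embOf J' hJ' a) ?_ ?_ ?_
    · intro a ha
      simp only [Finset.mem_filter, Finset.mem_univ, true_and] at ha
      exact Finset.mem_inter.mpr ⟨embOf_mem J' hJ' a, ha⟩
    · intro a _ b _ hab
      exact embOf_injective J' hJ' hab
    · intro x hx
      have hx1 : x ∈ J' := (Finset.mem_inter.mp hx).1
      have hx2 : x ∈ J := (Finset.mem_inter.mp hx).2
      rw [← embOf_image J' hJ'] at hx1
      obtain ⟨a, _, rfl⟩ := Finset.mem_image.mp hx1
      exact ⟨a, by simp [hx2], rfl⟩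

/-- For a robustly `P₀` and robustly non-degenerate network, every term
`det(-Γ_{IJ}) det(V_{JI})` with `|I| = |J| = r` is nonnegative for all admissible `V`. -/
theorem terms_nonneg (n ν : ℕ) (α β : Matrix (Fin n) (Fin ν) ℕ) (r : ℕ)
    (hr : r = (gam α β).rank)
    (hP0 : ∀ V, admissible α V → ∀ I : Finset (Fin n),
      0 ≤ principalMinor (-(gam α β * V)) I)
    (hND : ∀ V, admissible α V → sumMinors r (-(gam α β * V)) ≠ 0) :
    ∀ (I : Finset (Fin n)) (J : Finset (Fin ν)), I.card = r → J.card = r →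
      ∀ V, admissible α V →
        0 ≤ subdet r (-(gam α β)) I J * subdet r V J I := by
  intro I J hI hJ V hV
  classical
  -- the coefficients and exponents
  have hkle : ∀ J' : Finset (Fin ν), (J' ∩ J).card ≤ r := fun J' =>
    hJ ▸ Finset.card_le_card Finset.inter_subset_right
  have hkJ : (J ∩ J).card = r := by simp [hJ]
  have hklt : ∀ J' : Finset (Fin ν), J'.card = r → J' ≠ J → (J' ∩ J).card < r := by
    intro J' hJ'c hne
    refine lt_of_le_of_ne (hkle J') fun hEq => hne ?_
    have h1 : J' ∩ J = J := Finset.eq_of_subset_of_card_le Finset.inter_subset_right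
      (by rw [hEq, hJ])
    have h2 : J ⊆ J' := h1 ▸ Finset.inter_subset_left
    exact (Finset.eq_of_subset_of_card_le h2 (by rw [hJ'c, hJ])).symm
  set G : ℝ → ℝ := fun s => ∑ J' ∈ (Finset.univ : Finset (Fin ν)).powersetCard r,
    (subdet r (-(gam α β)) I J' * subdet r V J' I) * s ^ (r - (J' ∩ J).card) with hG
  -- G is nonnegative on (0, ∞)
  have hGpos : ∀ s ∈ Set.Ioi (0 : ℝ), 0 ≤ G s := by
    intro s hs
    have hs0 : (0 : ℝ) < s := hs
    set t : ℝ := s⁻¹ with ht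
    have ht0 : 0 < t := inv_pos.mpr hs0
    set V' : Matrix (Fin ν) (Fin n) ℝ := Matrix.of fun j i => (if j ∈ J then t else 1) * V j i
      with hV'
    have hadm : admissible α V' := by
      intro i j
      have h1 := (hV i j).1
      have h2 := (hV i j).2
      constructor
      · intro hα
        have : (0:ℝ) < (if j ∈ J then t else 1) := by split <;> [exact ht0; norm_num]
        exact mul_pos this (h1 hα)
      · intro hα
        show (if j ∈ J then t else 1) * V j i = 0
        rw [h2 hα, mul_zero]
    have h0 := hP0 V' hadm I
    rw [show -(gam α β * V') = (-(gam α β)) * V' by rw [Matrix.neg_mul]] at h0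
    rw [pm_expand (-(gam α β)) V' hI] at h0
    have hsum : ∀ J' ∈ (Finset.univ : Finset (Fin ν)).powersetCard r,
        subdet r (-(gam α β)) I J' * subdet r V' J' I
          = (subdet r (-(gam α β)) I J' * subdet r V J' I) * t ^ ((J' ∩ J).card) := by
      intro J' hJ'
      have hJ'c : J'.card = r := (Finset.mem_powersetCard.mp hJ').2
      rw [hV', subdet_scale V J t hJ'c hI]
      ring
    rw [Finset.sum_congr rfl hsum] at h0
    have hGs : G s = s ^ r * ∑ J' ∈ (Finset.univ : Finset (Fin ν)).powersetCard r,
        (subdet r (-(gam α β)) I J' * subdet r V J' I) * t ^ ((J' ∩ J).card) := by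
      rw [hG, Finset.mul_sum]
      refine Finset.sum_congr rfl fun J' hJ' => ?_
      have hk := hkle J'
      rw [ht, inv_pow, pow_sub₀ s (ne_of_gt hs0) hk]
      field_simp
    rw [hGs]
    exact mul_nonneg (pow_nonneg hs0.le r) h0
  -- G is continuous
  have hGcont : Continuous G := by
    refine continuous_finset_sum _ fun J' _ => ?_
    exact continuous_const.mul (continuous_pow _)
  -- G 0 is the desired quantity
  have hG0 : G 0 = subdet r (-(gam α β)) I J * subdet r V J I := by
    simp only [hG]
    rw [Finset.sum_eq_single_of_mem J (by rw [Finset.mem_powersetCard_univ]; exact hJ)]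
    · rw [hkJ, Nat.sub_self, pow_zero, mul_one]
    · intro J' hJ' hne
      have hJ'c : J'.card = r := (Finset.mem_powersetCard.mp hJ').2
      rw [zero_pow (Nat.sub_ne_zero_of_lt (hklt J' hJ'c hne)), mul_zero]
  -- conclude by taking the limit s → 0⁺
  have htend : Filter.Tendsto G (nhdsWithin 0 (Set.Ioi 0)) (nhds (G 0)) :=
    (hGcont.tendsto 0).mono_left nhdsWithin_le_nhds
  have : 0 ≤ G 0 :=
    ge_of_tendsto htend (eventually_mem_nhdsWithin.mono hGpos)
  rwa [hG0] at this
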